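/- Let d ≥ 2 and let K ⊂ ℝ^d be a convex body in standard position: w(K) = 1, K is spiky in direction −e_d, and K ∩ H_K(−e_d) = {0}; write T_K = T_K(0) and H_t = {x : x_d = t}. Fix ε ∈ (0,1) and for t > 0 let δ_t be the Hausdorff distance between ∂T_K ∩ H_t and (T_K \ int(ε·K)) ∩ H_t. Then δ_t is monotonically decreasing as t decreases to 0, and δ_t / t → 0 as t → 0 along positive values. -/

import Mathlib

open Set Metric Pointwise RealInnerProductSpace MeasureTheory

noncomputable section

/-- A plank in `ℝ^d`: the region between two parallel hyperplanes, of width `w`. -/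
def IsPlank {d : ℕ} (P : Set (EuclideanSpace ℝ (Fin d))) (w : ℝ) : Prop :=
  ∃ (u : EuclideanSpace ℝ (Fin d)) (a b : ℝ), ‖u‖ = 1 ∧ a ≤ b ∧ w = b - a ∧
    P = {x | a ≤ ⟪x, u⟫ ∧ ⟪x, u⟫ ≤ b}

/-- The support function of a set. -/
def suppFn {d : ℕ} (K : Set (EuclideanSpace ℝ (Fin d))) (u : EuclideanSpace ℝ (Fin d)) : ℝ :=
  sSup ((fun x => ⟪x, u⟫) '' K)

/-- The minimal width of a set: the minimum of `h_K(u) + h_K(-u)` over unit vectors `u`. -/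
def minWidth {d : ℕ} (K : Set (EuclideanSpace ℝ (Fin d))) : ℝ :=
  sInf {w | ∃ u : EuclideanSpace ℝ (Fin d), ‖u‖ = 1 ∧ w = suppFn K u + suppFn K (-u)}

/-- The supporting hyperplane of `K` with outer normal `u`. -/
def suppHyp {d : ℕ} (K : Set (EuclideanSpace ℝ (Fin d))) (u : EuclideanSpace ℝ (Fin d)) :
    Set (EuclideanSpace ℝ (Fin d)) :=
  {x | ⟪x, u⟫ = suppFn K u}

/-- The tangent cone of `K` at a point `x`:
`closure {x + α (y - x) : y ∈ K, α ≥ 0}`. -/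
def tangentConeOf {d : ℕ} (K : Set (EuclideanSpace ℝ (Fin d))) (x : EuclideanSpace ℝ (Fin d)) :
    Set (EuclideanSpace ℝ (Fin d)) :=
  closure {z | ∃ y ∈ K, ∃ α : ℝ, 0 ≤ α ∧ z = x + α • (y - x)}

/-- `K` is spiky in direction `u`: `K ∩ H_K(u)` is a single point `x` at which
`T_K(x) ∩ H_K(u) = {x}`. -/
def IsSpiky {d : ℕ} (K : Set (EuclideanSpace ℝ (Fin d))) (u : EuclideanSpace ℝ (Fin d)) : Prop :=
  ∃ x, K ∩ suppHyp K u = {x} ∧ tangentConeOf K x ∩ suppHyp K u = {x}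

set_option maxHeartbeats 1000000

namespace SpikyAux

variable {d : ℕ}

/-- The cone over `K` with apex `0`. -/
def coneSet (K : Set (EuclideanSpace ℝ (Fin d))) : Set (EuclideanSpace ℝ (Fin d)) :=
  {z | ∃ α : ℝ, 0 ≤ α ∧ ∃ y ∈ K, z = α • y}

theorem mem_coneSet {K : Set (EuclideanSpace ℝ (Fin d))} {α : ℝ} {y : EuclideanSpace ℝ (Fin d)}
    (hα : 0 ≤ α) (hy : y ∈ K) : α • y ∈ coneSet K := ⟨α, hα, y, hy, rfl⟩

theorem subset_coneSet {K : Set (EuclideanSpace ℝ (Fin d))} : K ⊆ coneSet K := by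
  intro y hy
  have := mem_coneSet (K := K) (α := 1) zero_le_one hy
  simpa using this

theorem coneSet_smul {K : Set (EuclideanSpace ℝ (Fin d))} {c : ℝ} (hc : 0 ≤ c)
    {z : EuclideanSpace ℝ (Fin d)} (hz : z ∈ coneSet K) : c • z ∈ coneSet K := by
  obtain ⟨α, hα, y, hy, rfl⟩ := hz
  rw [smul_smul]
  exact mem_coneSet (mul_nonneg hc hα) hy

theorem smul_set_mono_of_zero_mem {K : Set (EuclideanSpace ℝ (Fin d))} (hKconv : Convex ℝ K)
    (h0K : (0 : EuclideanSpace ℝ (Fin d)) ∈ K) {a b : ℝ} (ha : 0 ≤ a) (hab : a ≤ b) :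
    a • K ⊆ b • K := by
  rcases eq_or_lt_of_le (ha.trans hab) with hb | hb
  · have hae : a = 0 := le_antisymm (hab.trans hb.symm.le) ha
    rw [hae, ← hb]
  · rintro x ⟨y, hy, rfl⟩
    refine ⟨(a / b) • y, ?_, ?_⟩
    · have h1 : a / b ∈ Set.Icc (0:ℝ) 1 :=
        ⟨div_nonneg ha hb.le, (div_le_one hb).mpr hab⟩
      have := hKconv h0K hy (a := 1 - a / b) (b := a / b) (by linarith [h1.2]) h1.1 (by ring)
      simpa using this
    · show b • ((a / b) • y) = a • y
      rw [smul_smul, mul_div_cancel₀ _ hb.ne']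

theorem coneSet_convex {K : Set (EuclideanSpace ℝ (Fin d))} (hKconv : Convex ℝ K)
    (h0K : (0 : EuclideanSpace ℝ (Fin d)) ∈ K) : Convex ℝ (coneSet K) := by
  rintro x ⟨α, hα, p, hp, rfl⟩ y ⟨β, hβ, q, hq, rfl⟩ a b ha hb hab
  set γ : ℝ := a * α + b * β with hγ
  have hγ0 : 0 ≤ γ := add_nonneg (mul_nonneg ha hα) (mul_nonneg hb hβ)
  rcases eq_or_lt_of_le hγ0 with hzero | hpos
  · have h1 : a * α = 0 ∧ b * β = 0 := by
      constructor <;> nlinarith [mul_nonneg ha hα, mul_nonneg hb hβ]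
    have : a • α • p + b • β • q = (0:EuclideanSpace ℝ (Fin d)) := by
      rw [smul_smul, smul_smul, h1.1, h1.2, zero_smul, zero_smul, add_zero]
    rw [this]
    have := mem_coneSet (K := K) (α := 0) le_rfl h0K
    simpa using this
  · have hmem : (a * α / γ) • p + (b * β / γ) • q ∈ K := by
      apply hKconv hp hq (div_nonneg (mul_nonneg ha hα) hγ0)
        (div_nonneg (mul_nonneg hb hβ) hγ0)
      field_simp
      exact hγ.symm
    have heq : a • α • p + b • β • q = γ • ((a * α / γ) • p + (b * β / γ) • q) := by
      rw [smul_add, smul_smul, smul_smul, smul_smul, smul_smul]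
      rw [mul_div_cancel₀ _ hpos.ne', mul_div_cancel₀ _ hpos.ne']
    rw [heq]
    exact mem_coneSet hγ0 hmem

theorem abs_apply_le_norm (x : EuclideanSpace ℝ (Fin d)) (i : Fin d) : |x i| ≤ ‖x‖ := by
  have := abs_real_inner_le_norm x (EuclideanSpace.single i (1:ℝ))
  simpa [EuclideanSpace.inner_single_right] using this

theorem tangentConeOf_eq (K : Set (EuclideanSpace ℝ (Fin d))) :
    tangentConeOf K 0 = closure (coneSet K) := by
  have h : {z | ∃ y ∈ K, ∃ α : ℝ, 0 ≤ α ∧ z = 0 + α • (y - 0)} = coneSet K := by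
    ext z
    constructor
    · rintro ⟨y, hy, α, hα, rfl⟩
      exact ⟨α, hα, y, hy, by simp⟩
    · rintro ⟨α, hα, y, hy, rfl⟩
      exact ⟨y, hy, α, hα, by simp⟩
  rw [tangentConeOf, h]

theorem interior_closure_coneSet {K : Set (EuclideanSpace ℝ (Fin d))} (hKconv : Convex ℝ K)
    (h0K : (0 : EuclideanSpace ℝ (Fin d)) ∈ K) (hKint : (interior K).Nonempty) :
    interior (closure (coneSet K)) = interior (coneSet K) := by
  apply Subset.antisymm
  · obtain ⟨p, hp⟩ := hKint
    have hpc : p ∈ interior (coneSet K) :=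
      interior_mono subset_coneSet hp
    intro x hx
    have hopen : IsOpen (interior (closure (coneSet K))) := isOpen_interior
    obtain ⟨ρ, hρ, hball⟩ := Metric.isOpen_iff.mp hopen x hx
    set θ : ℝ := ρ / (2 * (‖x - p‖ + 1)) with hθdef
    have hden : (0:ℝ) < 2 * (‖x - p‖ + 1) := by positivity
    have hθ : 0 < θ := div_pos hρ hden
    have hx' : x + θ • (x - p) ∈ closure (coneSet K) := by
      apply interior_subset
      apply hball
      rw [Metric.mem_ball, dist_eq_norm]
      have h3 : x + θ • (x - p) - x = θ • (x - p) := by abel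
      rw [h3, norm_smul, Real.norm_eq_abs, abs_of_pos hθ]
      rw [hθdef, div_mul_eq_mul_div, div_lt_iff₀ hden]
      nlinarith [norm_nonneg (x - p)]
    have hcomb := (coneSet_convex hKconv h0K).combo_closure_interior_mem_interior
      hx' hpc (a := 1 / (1 + θ)) (b := θ / (1 + θ))
      (by positivity) (by positivity) (by field_simp)
    have h1θ : (1 + θ) ≠ 0 := by positivity
    have heq : (1 / (1 + θ)) • (x + θ • (x - p)) + (θ / (1 + θ)) • p = x := by
      match_scalars <;> field_simp <;> ring
    rwa [heq] at hcomb
  · exact interior_mono subset_closure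

/-- Any interior point of the cone lies in the interior of a dilate of `K`. -/
theorem exists_smul_interior {K : Set (EuclideanSpace ℝ (Fin d))} (hKconv : Convex ℝ K)
    (h0K : (0 : EuclideanSpace ℝ (Fin d)) ∈ K) (hKint : (interior K).Nonempty)
    {y : EuclideanSpace ℝ (Fin d)} (hy : y ∈ interior (closure (coneSet K))) :
    ∃ β : ℝ, 1 ≤ β ∧ y ∈ interior (β • K) := by
  rw [interior_closure_coneSet hKconv h0K hKint] at hy
  obtain ⟨p, hp⟩ := hKint
  obtain ⟨ρ, hρ, hball⟩ := Metric.isOpen_iff.mp isOpen_interior y hy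
  set θ : ℝ := ρ / (2 * (‖y - p‖ + 1)) with hθdef
  have hden : (0:ℝ) < 2 * (‖y - p‖ + 1) := by positivity
  have hθ : 0 < θ := div_pos hρ hden
  have hy' : y + θ • (y - p) ∈ coneSet K := by
    apply interior_subset
    apply hball
    rw [Metric.mem_ball, dist_eq_norm]
    have h3 : y + θ • (y - p) - y = θ • (y - p) := by abel
    rw [h3, norm_smul, Real.norm_eq_abs, abs_of_pos hθ]
    rw [hθdef, div_mul_eq_mul_div, div_lt_iff₀ hden]
    nlinarith [norm_nonneg (y - p)]
  obtain ⟨α, hα, z, hz, hzeq⟩ := hy'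
  refine ⟨max α 1, le_max_right _ _, ?_⟩
  have hβ1 : (1:ℝ) ≤ max α 1 := le_max_right _ _
  have hβconv : Convex ℝ ((max α 1) • K) := hKconv.smul _
  have hy'mem : y + θ • (y - p) ∈ (max α 1) • K := by
    rw [hzeq]
    exact smul_set_mono_of_zero_mem hKconv h0K hα (le_max_left _ _) ⟨z, hz, rfl⟩
  have hpmem : p ∈ interior ((max α 1) • K) := by
    apply interior_mono _ hp
    have h1 := smul_set_mono_of_zero_mem hKconv h0K zero_le_one hβ1
    simpa using h1
  have hcomb := hβconv.combo_closure_interior_mem_interior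
    (subset_closure hy'mem) hpmem (a := 1 / (1 + θ)) (b := θ / (1 + θ))
    (by positivity) (by positivity) (by field_simp)
  have h1θ : (1 + θ) ≠ 0 := by positivity
  have heq : (1 / (1 + θ)) • (y + θ • (y - p)) + (θ / (1 + θ)) • p = y := by
    match_scalars <;> field_simp <;> ring
  rwa [heq] at hcomb


theorem apply_add_smul_single (x : EuclideanSpace ℝ (Fin d)) (c : ℝ) (k l : Fin d) :
    (x + c • EuclideanSpace.single k (1:ℝ)) l = x l + (if l = k then c else 0) := by
  have h1 : (x + c • EuclideanSpace.single k (1:ℝ)) l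
      = x l + c * (EuclideanSpace.single k (1:ℝ)) l := rfl
  rw [h1, EuclideanSpace.single_apply]
  split_ifs <;> ring

theorem aux_main (d : ℕ) (i j : Fin d) (hij : j ≠ i)
    (K : Set (EuclideanSpace ℝ (Fin d)))
    (hKc : IsCompact K) (hKconv : Convex ℝ K) (hKint : (interior K).Nonempty)
    (h0K : (0 : EuclideanSpace ℝ (Fin d)) ∈ K)
    (hposK : ∀ x ∈ K, 0 ≤ x i)
    (hslice0 : tangentConeOf K 0 ∩ {x : EuclideanSpace ℝ (Fin d) | x i = 0} = {0})
    (ε : ℝ) (hε : ε ∈ Set.Ioo (0:ℝ) 1)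
    (δ : ℝ → ℝ)
    (hδ : ∀ t : ℝ, δ t = Metric.hausdorffDist
      (frontier (tangentConeOf K 0) ∩ {x : EuclideanSpace ℝ (Fin d) | x i = t})
      ((tangentConeOf K 0 \ interior (ε • K)) ∩ {x : EuclideanSpace ℝ (Fin d) | x i = t})) :
    (∀ s t : ℝ, 0 < s → s ≤ t → δ s ≤ δ t) ∧
    Filter.Tendsto (fun t : ℝ => δ t / t) (nhdsWithin 0 (Set.Ioi 0)) (nhds 0) := by
  set T := tangentConeOf K 0 with hTdef
  have hTc : T = closure (coneSet K) := tangentConeOf_eq K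
  have hTclosed : IsClosed T := by rw [hTc]; exact isClosed_closure
  have hKT : K ⊆ T := by rw [hTc]; exact subset_coneSet.trans subset_closure
  have h0T : (0 : EuclideanSpace ℝ (Fin d)) ∈ T := hKT h0K
  have hconti : Continuous (fun x : EuclideanSpace ℝ (Fin d) => x i) :=
    (EuclideanSpace.proj i).continuous
  have hcontj : Continuous (fun x : EuclideanSpace ℝ (Fin d) => x j) :=
    (EuclideanSpace.proj j).continuous
  -- the `i`-th coordinate is nonnegative on `T`
  have hposT : ∀ x ∈ T, 0 ≤ x i := by
    rw [hTc]
    intro x hx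
    have hsub : coneSet K ⊆ {x : EuclideanSpace ℝ (Fin d) | 0 ≤ x i} := by
      rintro z ⟨α, hα, y, hy, rfl⟩
      have h1 : (α • y) i = α * y i := rfl
      simp only [Set.mem_setOf_eq, h1]
      exact mul_nonneg hα (hposK y hy)
    have hclosed : IsClosed {x : EuclideanSpace ℝ (Fin d) | 0 ≤ x i} :=
      isClosed_le continuous_const hconti
    exact (closure_minimal hsub hclosed) hx
  -- scaling invariance of T
  have hTsmul : ∀ c : ℝ, 0 < c → ∀ z ∈ T, c • z ∈ T := by
    intro c hc z hz
    rw [hTc] at hz ⊢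
    have hmap : Set.MapsTo (fun w : EuclideanSpace ℝ (Fin d) => c • w) (coneSet K) (coneSet K) :=
      fun w hw => coneSet_smul hc.le hw
    exact hmap.closure (continuous_const_smul c) hz
  have hTsmul_eq : ∀ c : ℝ, 0 < c → c • T = T := by
    intro c hc
    apply Subset.antisymm
    · rintro x ⟨z, hz, rfl⟩; exact hTsmul c hc z hz
    · intro z hz
      refine ⟨c⁻¹ • z, hTsmul c⁻¹ (inv_pos.mpr hc) z hz, ?_⟩
      show c • c⁻¹ • z = z
      rw [smul_smul, mul_inv_cancel₀ hc.ne', one_smul]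
  have hIntSmul_eq : ∀ c : ℝ, 0 < c → c • interior T = interior T := by
    intro c hc
    rw [← interior_smul₀ hc.ne' T, hTsmul_eq c hc]
  have hFr : frontier T = T \ interior T := hTclosed.frontier_eq
  have hFrSmul : ∀ c : ℝ, 0 < c → ∀ z ∈ frontier T, c • z ∈ frontier T := by
    intro c hc z hz
    rw [hFr] at hz ⊢
    refine ⟨hTsmul c hc z hz.1, fun hmem => hz.2 ?_⟩
    have h1 : c⁻¹ • (c • z) ∈ c⁻¹ • interior T := ⟨c • z, hmem, rfl⟩
    rw [hIntSmul_eq c⁻¹ (inv_pos.mpr hc)] at h1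
    rwa [smul_smul, inv_mul_cancel₀ hc.ne', one_smul] at h1
  -- coercivity
  obtain ⟨m, hm0, hmT⟩ : ∃ m : ℝ, 0 < m ∧ ∀ x ∈ T, m * ‖x‖ ≤ x i := by
    by_cases hC : (T ∩ Metric.sphere 0 1).Nonempty
    · have hCc : IsCompact (T ∩ Metric.sphere 0 1) :=
        (isCompact_sphere 0 1).of_isClosed_subset
          (hTclosed.inter Metric.isClosed_sphere) inter_subset_right
      obtain ⟨x₀, hx₀, hmin⟩ := hCc.exists_isMinOn hC hconti.continuousOn
      have hx₀n : ‖x₀‖ = 1 := mem_sphere_zero_iff_norm.mp hx₀.2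
      have hx₀pos : 0 < x₀ i := by
        rcases lt_or_eq_of_le (hposT x₀ hx₀.1) with h | h
        · exact h
        · exfalso
          have : x₀ ∈ T ∩ {x : EuclideanSpace ℝ (Fin d) | x i = 0} := ⟨hx₀.1, h.symm⟩
          rw [hslice0] at this
          rw [Set.mem_singleton_iff] at this
          rw [this] at hx₀n
          simp at hx₀n
      refine ⟨x₀ i, hx₀pos, fun x hx => ?_⟩
      rcases eq_or_ne x 0 with rfl | hxne
      · simp
      · have hnx : 0 < ‖x‖ := norm_pos_iff.mpr hxne
        have hu : ‖x‖⁻¹ • x ∈ T ∩ Metric.sphere 0 1 := by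
          refine ⟨hTsmul _ (inv_pos.mpr hnx) x hx, ?_⟩
          rw [mem_sphere_zero_iff_norm, norm_smul, Real.norm_eq_abs,
            abs_of_pos (inv_pos.mpr hnx), inv_mul_cancel₀ hnx.ne']
        have h5 : x₀ i ≤ ‖x‖⁻¹ * x i := hmin hu
        have h6 : x₀ i * ‖x‖ ≤ ‖x‖⁻¹ * x i * ‖x‖ := mul_le_mul_of_nonneg_right h5 hnx.le
        have h7 : ‖x‖⁻¹ * x i * ‖x‖ = x i := by field_simp
        linarith
    · refine ⟨1, one_pos, fun x hx => ?_⟩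
      rcases eq_or_ne x 0 with rfl | hxne
      · simp
      · exfalso
        apply hC
        have hnx : 0 < ‖x‖ := norm_pos_iff.mpr hxne
        refine ⟨‖x‖⁻¹ • x, hTsmul _ (inv_pos.mpr hnx) x hx, ?_⟩
        rw [mem_sphere_zero_iff_norm, norm_smul, Real.norm_eq_abs,
          abs_of_pos (inv_pos.mpr hnx), inv_mul_cancel₀ hnx.ne']
  -- slices of T are compact
  have hsliceCompact : ∀ t : ℝ, IsCompact (T ∩ {x : EuclideanSpace ℝ (Fin d) | x i = t}) := by
    intro t
    apply IsCompact.of_isClosed_subset (isCompact_closedBall (0 : EuclideanSpace ℝ (Fin d)) (|t|/m))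
      (hTclosed.inter (isClosed_eq hconti continuous_const))
    rintro x ⟨hxT, hxi⟩
    rw [Metric.mem_closedBall, dist_zero_right]
    have h1 := hmT x hxT
    rw [hxi] at h1
    rw [le_div_iff₀ hm0]
    calc ‖x‖ * m = m * ‖x‖ := by ring
      _ ≤ t := h1
      _ ≤ |t| := le_abs_self t
  -- a point of K with positive i-th coordinate
  obtain ⟨q, hqK, hqi⟩ : ∃ q ∈ K, 0 < q i := by
    obtain ⟨p, hp⟩ := hKint
    obtain ⟨r, hr, hball⟩ := Metric.isOpen_iff.mp isOpen_interior p hp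
    refine ⟨p + (r/2) • EuclideanSpace.single i 1, interior_subset (hball ?_), ?_⟩
    · rw [Metric.mem_ball, dist_eq_norm]
      have h1 : p + (r/2) • EuclideanSpace.single i 1 - p = (r/2) • EuclideanSpace.single i 1 := by
        abel
      rw [h1, norm_smul, Real.norm_eq_abs, abs_of_pos (by linarith), EuclideanSpace.norm_single]
      simp only [norm_one, mul_one]
      linarith
    · have hpi := hposK p (interior_subset hp)
      rw [apply_add_smul_single, if_pos rfl]
      linarith
  -- slices of T are nonempty for t > 0
  have hsliceNe : ∀ t : ℝ, 0 < t →
      (T ∩ {x : EuclideanSpace ℝ (Fin d) | x i = t}).Nonempty := by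
    intro t ht
    refine ⟨(t / q i) • q, ?_, ?_⟩
    · rw [hTc]
      exact subset_closure (mem_coneSet (div_nonneg ht.le hqi.le) hqK)
    · show (t / q i) * q i = t
      field_simp
  -- frontier slices are nonempty for t > 0
  have hAne : ∀ t : ℝ, 0 < t →
      (frontier T ∩ {x : EuclideanSpace ℝ (Fin d) | x i = t}).Nonempty := by
    intro t ht
    obtain ⟨x, hxmem, hxmax⟩ := (hsliceCompact t).exists_isMaxOn (hsliceNe t ht)
      hcontj.continuousOn
    refine ⟨x, ?_, hxmem.2⟩
    rw [hFr]
    refine ⟨hxmem.1, fun hint => ?_⟩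
    obtain ⟨ρ, hρ, hball⟩ := Metric.isOpen_iff.mp isOpen_interior x hint
    have hx' : x + (ρ/2) • EuclideanSpace.single j 1
        ∈ T ∩ {x : EuclideanSpace ℝ (Fin d) | x i = t} := by
      constructor
      · apply interior_subset
        apply hball
        rw [Metric.mem_ball, dist_eq_norm]
        have h1 : x + (ρ/2) • EuclideanSpace.single j 1 - x
            = (ρ/2) • EuclideanSpace.single j 1 := by abel
        rw [h1, norm_smul, Real.norm_eq_abs, abs_of_pos (by linarith),
          EuclideanSpace.norm_single]
        simp only [norm_one, mul_one]
        linarith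
      · simp only [Set.mem_setOf_eq, apply_add_smul_single, if_neg hij.symm, add_zero]
        exact hxmem.2
    have h2 := hxmax hx'
    simp [apply_add_smul_single] at h2
    linarith
  -- relations between the two slice families
  have hεT : ε • K ⊆ T := by
    rintro x ⟨y, hy, rfl⟩
    rw [hTc]
    exact subset_closure (mem_coneSet hε.1.le hy)
  have hABsub : ∀ t : ℝ, frontier T ∩ {x : EuclideanSpace ℝ (Fin d) | x i = t}
      ⊆ (T \ interior (ε • K)) ∩ {x : EuclideanSpace ℝ (Fin d) | x i = t} := by
    intro t x hx
    have h1 : x ∈ T \ interior T := hFr ▸ hx.1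
    exact ⟨⟨h1.1, fun hc => h1.2 (interior_mono hεT hc)⟩, hx.2⟩
  have hBsub : ∀ t : ℝ, (T \ interior (ε • K)) ∩ {x : EuclideanSpace ℝ (Fin d) | x i = t}
      ⊆ T ∩ {x : EuclideanSpace ℝ (Fin d) | x i = t} := fun t x hx => ⟨hx.1.1, hx.2⟩
  have hBbd : ∀ t : ℝ, Bornology.IsBounded
      ((T \ interior (ε • K)) ∩ {x : EuclideanSpace ℝ (Fin d) | x i = t}) :=
    fun t => (hsliceCompact t).isBounded.subset (hBsub t)
  have hAcompact : ∀ t : ℝ,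
      IsCompact (frontier T ∩ {x : EuclideanSpace ℝ (Fin d) | x i = t}) := by
    intro t
    apply (hsliceCompact t).of_isClosed_subset
      (isClosed_frontier.inter (isClosed_eq hconti continuous_const))
    intro x hx
    exact ⟨(hFr ▸ hx.1).1, hx.2⟩
  -- scaling out of the interior of ε • K
  have hscaleout : ∀ lam : ℝ, 1 ≤ lam → ∀ x : EuclideanSpace ℝ (Fin d),
      x ∉ interior (ε • K) → lam • x ∉ interior (ε • K) := by
    intro lam hlam x hx hmem
    apply hx
    have hlam0 : 0 < lam := lt_of_lt_of_le one_pos hlam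
    have hconv : Convex ℝ (ε • K) := hKconv.smul ε
    have h0 : (0 : EuclideanSpace ℝ (Fin d)) ∈ ε • K := ⟨0, h0K, by simp⟩
    have hinv : lam⁻¹ ≤ 1 := by
      rw [← one_div, div_le_one hlam0]; exact hlam
    have hcomb := hconv.combo_interior_closure_mem_interior hmem (subset_closure h0)
      (a := lam⁻¹) (b := 1 - lam⁻¹) (inv_pos.mpr hlam0) (by linarith) (by ring)
    have heq : lam⁻¹ • (lam • x) + (1 - lam⁻¹) • (0 : EuclideanSpace ℝ (Fin d)) = x := by
      rw [smul_zero, add_zero, smul_smul, inv_mul_cancel₀ hlam0.ne', one_smul]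
    rwa [heq] at hcomb
  constructor
  · -- monotonicity
    intro s t hs hst
    have ht : 0 < t := lt_of_lt_of_le hs hst
    rw [hδ s, hδ t]
    apply Metric.hausdorffDist_le_of_mem_dist Metric.hausdorffDist_nonneg
    · intro x hx
      exact ⟨x, hABsub s hx, by rw [dist_self]; exact Metric.hausdorffDist_nonneg⟩
    · intro y hy
      set c : ℝ := t / s with hc
      have hc1 : (1:ℝ) ≤ c := (one_le_div hs).mpr hst
      have hc0 : 0 < c := lt_of_lt_of_le one_pos hc1
      have hy' : c • y ∈ (T \ interior (ε • K)) ∩ {x : EuclideanSpace ℝ (Fin d) | x i = t} := by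
        refine ⟨⟨hTsmul c hc0 y hy.1.1, hscaleout c hc1 y hy.1.2⟩, ?_⟩
        show (c • y) i = t
        have h1 : (c • y) i = c * y i := rfl
        rw [h1, hy.2, hc]
        field_simp
      have hfin : EMetric.hausdorffEdist
          ((T \ interior (ε • K)) ∩ {x : EuclideanSpace ℝ (Fin d) | x i = t})
          (frontier T ∩ {x : EuclideanSpace ℝ (Fin d) | x i = t}) ≠ ⊤ :=
        Metric.hausdorffEdist_ne_top_of_nonempty_of_bounded ⟨c • y, hy'⟩ (hAne t ht)
          (hBbd t) (hAcompact t).isBounded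
      have h1 : Metric.infDist (c • y) (frontier T ∩ {x : EuclideanSpace ℝ (Fin d) | x i = t})
          ≤ Metric.hausdorffDist (frontier T ∩ {x : EuclideanSpace ℝ (Fin d) | x i = t})
            ((T \ interior (ε • K)) ∩ {x : EuclideanSpace ℝ (Fin d) | x i = t}) := by
        rw [Metric.hausdorffDist_comm]
        exact Metric.infDist_le_hausdorffDist_of_mem hy' hfin
      obtain ⟨a, ha, hda⟩ := (hAcompact t).exists_infDist_eq_dist (hAne t ht) (c • y)
      refine ⟨c⁻¹ • a, ⟨hFrSmul c⁻¹ (inv_pos.mpr hc0) a ha.1, ?_⟩, ?_⟩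
      · show (c⁻¹ • a) i = s
        have h2 : (c⁻¹ • a) i = c⁻¹ * a i := rfl
        rw [h2, ha.2, hc]
        field_simp
      · have h3 : dist y (c⁻¹ • a) = c⁻¹ * dist (c • y) a := by
          have hyy : y = c⁻¹ • (c • y) := by
            rw [smul_smul, inv_mul_cancel₀ hc0.ne', one_smul]
          conv_lhs => rw [hyy]
          rw [dist_smul₀, Real.norm_eq_abs, abs_of_pos (inv_pos.mpr hc0)]
        have hinv1 : c⁻¹ ≤ 1 := by rw [← one_div, div_le_one hc0]; exact hc1
        have hd0 : (0:ℝ) ≤ dist (c • y) a := dist_nonneg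
        rw [h3]
        calc c⁻¹ * dist (c • y) a ≤ dist (c • y) a := by nlinarith
          _ = Metric.infDist (c • y) (frontier T ∩ {x : EuclideanSpace ℝ (Fin d) | x i = t}) :=
            hda.symm
          _ ≤ _ := h1
  · -- the limit
    have hFne : (frontier T).Nonempty := by
      obtain ⟨x, hx⟩ := hAne 1 one_pos
      exact ⟨x, hx.1⟩
    set C : ℝ := 1 + 2 * (1/m + 1) with hCdef
    have hC0 : 0 < C := by positivity
    have key : ∀ η : ℝ, 0 < η → η < 1/2 → ∃ t0 : ℝ, 0 < t0 ∧
        ∀ t : ℝ, 0 < t → t ≤ t0 → δ t ≤ C * η * t := by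
      intro η hη hη2
      set S := T ∩ {x : EuclideanSpace ℝ (Fin d) | x i = 1}
        ∩ {y : EuclideanSpace ℝ (Fin d) | η ≤ Metric.infDist y (frontier T)} with hSdef
      have hSclosed : IsClosed S :=
        ((hTclosed.inter (isClosed_eq hconti continuous_const)).inter
          (isClosed_le continuous_const (continuous_infDist_pt _)))
      have hScompact : IsCompact S :=
        (hsliceCompact 1).of_isClosed_subset hSclosed (fun x hx => hx.1)
      have hSint : S ⊆ interior T := by
        intro y hy
        have hyF : y ∉ frontier T := by
          intro hyF
          have hy2 : η ≤ Metric.infDist y (frontier T) := hy.2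
          rw [Metric.infDist_zero_of_mem hyF] at hy2
          linarith
        rw [hFr] at hyF
        by_contra hyint
        exact hyF ⟨hy.1.1, hyint⟩
      have hcover : S ⊆ ⋃ n : ℕ, interior ((n:ℝ) • K) := by
        intro y hy
        have hyi : y ∈ interior (closure (coneSet K)) := by
          rw [← hTc]; exact hSint hy
        obtain ⟨β, hβ1, hβ⟩ := exists_smul_interior hKconv h0K hKint hyi
        refine Set.mem_iUnion.mpr ⟨⌈β⌉₊, ?_⟩
        apply interior_mono (smul_set_mono_of_zero_mem hKconv h0K (by linarith) (Nat.le_ceil β)) hβ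
      obtain ⟨F, hF⟩ := hScompact.elim_finite_subcover
        (fun n : ℕ => interior ((n:ℝ) • K)) (fun n => isOpen_interior) hcover
      set N : ℕ := F.sup id + 1 with hNdef
      have hN1 : (1:ℝ) ≤ (N:ℝ) := by
        exact_mod_cast Nat.succ_le_succ (Nat.zero_le _)
      have hN0 : (0:ℝ) < (N:ℝ) := lt_of_lt_of_le one_pos hN1
      have hSN : S ⊆ interior ((N:ℝ) • K) := by
        intro y hy
        obtain ⟨n, hnF, hyn⟩ := Set.mem_iUnion₂.mp (hF hy)
        have hnN : (n:ℝ) ≤ (N:ℝ) := by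
          exact_mod_cast (Finset.le_sup (f := id) hnF).trans (Nat.le_succ _)
        exact interior_mono (smul_set_mono_of_zero_mem hKconv h0K (Nat.cast_nonneg n) hnN) hyn
      refine ⟨ε / N, div_pos hε.1 hN0, ?_⟩
      intro t ht htle
      rw [hδ t]
      have hr0 : (0:ℝ) ≤ C * η * t := le_of_lt (mul_pos (mul_pos hC0 hη) ht)
      apply Metric.hausdorffDist_le_of_mem_dist hr0
      · intro x hx
        exact ⟨x, hABsub t hx, by rw [dist_self]; exact hr0⟩
      · intro b hb
        have hbT : b ∈ T := hb.1.1
        have hbK : b ∉ interior (ε • K) := hb.1.2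
        have hbi : b i = t := hb.2
        have htinv : (0:ℝ) < t⁻¹ := inv_pos.mpr ht
        set y := t⁻¹ • b with hydef
        have hyT : y ∈ T := hTsmul _ htinv _ hbT
        have hyi : y i = 1 := by
          show t⁻¹ * b i = 1
          rw [hbi, inv_mul_cancel₀ ht.ne']
        have hby : b = t • y := by
          rw [hydef, smul_smul, mul_inv_cancel₀ ht.ne', one_smul]
        have hyS : y ∉ S := by
          intro hyS
          apply hbK
          have h1 : y ∈ interior ((N:ℝ) • K) := hSN hyS
          have h2 : b ∈ t • interior ((N:ℝ) • K) := ⟨y, h1, hby.symm⟩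
          rw [← interior_smul₀ ht.ne' _] at h2
          have h3 : t • ((N:ℝ) • K) = (t * (N:ℝ)) • K := (mul_smul t ((N:ℝ)) K).symm
          rw [h3] at h2
          have h4 : t * (N:ℝ) ≤ ε := by
            rw [← le_div_iff₀ hN0]
            exact htle
          exact interior_mono
            (smul_set_mono_of_zero_mem hKconv h0K (le_of_lt (mul_pos ht hN0)) h4) h2
        have hinf : Metric.infDist y (frontier T) < η := by
          by_contra hcon
          exact hyS ⟨⟨hyT, hyi⟩, not_lt.mp hcon⟩
        obtain ⟨z, hzF, hzd⟩ := (Metric.infDist_lt_iff hFne).mp hinf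
        have hz1 : |z i - 1| < η := by
          have h1 : z i - 1 = (z - y) i := by
            have h2 : (z - y) i = z i - y i := rfl
            rw [h2, hyi]
          rw [h1]
          calc |(z - y) i| ≤ ‖z - y‖ := abs_apply_le_norm (z - y) i
            _ = dist z y := (dist_eq_norm z y).symm
            _ = dist y z := dist_comm z y
            _ < η := hzd
        have hzi : (1:ℝ)/2 < z i := by
          have := abs_lt.mp hz1
          linarith
        have hzi0 : (0:ℝ) < z i := by linarith
        set z' := (z i)⁻¹ • z with hz'def
        have hz'F : z' ∈ frontier T := hFrSmul _ (inv_pos.mpr hzi0) z hzF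
        have hz'i : z' i = 1 := by
          show (z i)⁻¹ * z i = 1
          exact inv_mul_cancel₀ hzi0.ne'
        have hny : ‖y‖ ≤ 1/m := by
          have h1 := hmT y hyT
          rw [hyi] at h1
          rw [le_div_iff₀ hm0]
          linarith
        have hnz : ‖z‖ ≤ 1/m + 1 := by
          have h2 : ‖z‖ ≤ ‖y‖ + dist y z := by
            have h3 := dist_triangle z y 0
            rw [dist_zero_right, dist_zero_right] at h3
            rw [dist_comm z y] at h3
            linarith
          linarith
        have hdzz' : dist z z' ≤ 2 * η * (1/m + 1) := by
          rw [dist_eq_norm]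
          have h1 : z - z' = (1 - (z i)⁻¹) • z := by
            rw [hz'def, sub_smul, one_smul]
          rw [h1, norm_smul, Real.norm_eq_abs]
          have habs : |1 - (z i)⁻¹| ≤ 2 * η := by
            have h4 : 1 - (z i)⁻¹ = (z i - 1) / z i := by field_simp
            rw [h4, abs_div, abs_of_pos hzi0, div_le_iff₀ hzi0]
            have h5 := hz1.le
            nlinarith
          have hn0 : (0:ℝ) ≤ ‖z‖ := norm_nonneg z
          nlinarith
        have hdyz' : dist y z' ≤ C * η := by
          calc dist y z' ≤ dist y z + dist z z' := dist_triangle y z z'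
            _ ≤ η + 2 * η * (1/m + 1) := by linarith [hzd.le]
            _ = C * η := by rw [hCdef]; ring
        refine ⟨t • z', ⟨hFrSmul t ht z' hz'F, ?_⟩, ?_⟩
        · show t * z' i = t
          rw [hz'i, mul_one]
        · have h1 : dist b (t • z') = t * dist y z' := by
            rw [hby, dist_smul₀, Real.norm_eq_abs, abs_of_pos ht]
          rw [h1]
          calc t * dist y z' ≤ t * (C * η) :=
              mul_le_mul_of_nonneg_left hdyz' ht.le
            _ = C * η * t := by ring
    -- conclude the limit from `key`
    rw [Metric.tendsto_nhdsWithin_nhds]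
    intro ε' hε'
    have hη0 : 0 < min (ε' / (2 * C)) (1/4) :=
      lt_min (div_pos hε' (by positivity)) (by norm_num)
    have hη2 : min (ε' / (2 * C)) (1/4) < 1/2 :=
      lt_of_le_of_lt (min_le_right _ _) (by norm_num)
    obtain ⟨t0, ht0, hkey⟩ := key (min (ε' / (2 * C)) (1/4)) hη0 hη2
    refine ⟨t0, ht0, ?_⟩
    intro t htI hdist
    have ht : 0 < t := htI
    have htle : t ≤ t0 := by
      have h1 : |t| < t0 := by
        rw [Real.dist_eq, sub_zero] at hdist
        exact hdist
      calc t ≤ |t| := le_abs_self t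
        _ ≤ t0 := h1.le
    have hδt := hkey t ht htle
    have hδnn : 0 ≤ δ t := by rw [hδ t]; exact Metric.hausdorffDist_nonneg
    rw [Real.dist_eq, sub_zero, abs_of_nonneg (div_nonneg hδnn ht.le)]
    have h1 : δ t / t ≤ C * min (ε' / (2 * C)) (1/4) := by
      rw [div_le_iff₀ ht]
      calc δ t ≤ C * min (ε' / (2 * C)) (1/4) * t := hδt
        _ = C * min (ε' / (2 * C)) (1/4) * t := rfl
    have h2 : C * min (ε' / (2 * C)) (1/4) ≤ C * (ε' / (2 * C)) :=
      mul_le_mul_of_nonneg_left (min_le_left _ _) hC0.le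
    have h3 : C * (ε' / (2 * C)) = ε' / 2 := by
      field_simp
    linarith

end SpikyAux

/-- for a spiky convex body in standard position and `ε ∈ (0,1)`, the Hausdorff
distance `δ_t` between `∂T_K ∩ H_t` and `(T_K \ int (ε • K)) ∩ H_t` is monotonically
decreasing as `t ↘ 0`, and `δ_t / t → 0` as `t → 0⁺`. -/
theorem hausdorff_distance_of_slices (d : ℕ) (hd : 2 ≤ d)
    (K : Set (EuclideanSpace ℝ (Fin d)))
    (hKc : IsCompact K) (hKconv : Convex ℝ K) (hKint : (interior K).Nonempty)
    (hw : minWidth K = 1)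
    (hspiky : IsSpiky K (-(EuclideanSpace.single (⟨d - 1, by omega⟩ : Fin d) (1 : ℝ))))
    (hzero : K ∩ suppHyp K (-(EuclideanSpace.single (⟨d - 1, by omega⟩ : Fin d) (1 : ℝ))) = {0})
    (ε : ℝ) (hε : ε ∈ Set.Ioo (0 : ℝ) 1)
    (δ : ℝ → ℝ)
    (hδ : ∀ t : ℝ, δ t = Metric.hausdorffDist
      (frontier (tangentConeOf K 0) ∩ {x : EuclideanSpace ℝ (Fin d) | x ⟨d - 1, by omega⟩ = t})
      ((tangentConeOf K 0 \ interior (ε • K)) ∩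
        {x : EuclideanSpace ℝ (Fin d) | x ⟨d - 1, by omega⟩ = t})) :
    (∀ s t : ℝ, 0 < s → s ≤ t → δ s ≤ δ t) ∧
    Filter.Tendsto (fun t : ℝ => δ t / t) (nhdsWithin 0 (Set.Ioi 0)) (nhds 0) := by
  have hd1 : d - 1 < d := by omega
  have h0d : 0 < d := by omega
  set i : Fin d := ⟨d - 1, hd1⟩ with hidef
  set j : Fin d := ⟨0, h0d⟩ with hjdef
  have hij : j ≠ i := by
    simp only [hidef, hjdef, ne_eq, Fin.mk.injEq]
    omega
  have h0mem : (0 : EuclideanSpace ℝ (Fin d)) ∈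
      K ∩ suppHyp K (-(EuclideanSpace.single i (1 : ℝ))) := by
    have h := hzero
    rw [h]
    rfl
  have h0K : (0 : EuclideanSpace ℝ (Fin d)) ∈ K := h0mem.1
  have hsupp0 : suppFn K (-(EuclideanSpace.single i (1 : ℝ))) = 0 := by
    have h := h0mem.2
    simp only [suppHyp, Set.mem_setOf_eq, inner_zero_left] at h
    exact h.symm
  have hinnerx : ∀ x : EuclideanSpace ℝ (Fin d),
      ⟪x, -(EuclideanSpace.single i (1:ℝ))⟫ = -(x i) := by
    intro x
    rw [inner_neg_right, EuclideanSpace.inner_single_right]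
    simp
  have hposK : ∀ x ∈ K, 0 ≤ x i := by
    intro x hx
    have hb : BddAbove ((fun x : EuclideanSpace ℝ (Fin d) =>
        ⟪x, -(EuclideanSpace.single i (1:ℝ))⟫) '' K) :=
      (hKc.image (Continuous.inner continuous_id continuous_const)).bddAbove
    have hle : ⟪x, -(EuclideanSpace.single i (1:ℝ))⟫
        ≤ suppFn K (-(EuclideanSpace.single i (1:ℝ))) :=
      le_csSup hb ⟨x, hx, rfl⟩
    rw [hsupp0, hinnerx x] at hle
    linarith
  have hHyp : suppHyp K (-(EuclideanSpace.single i (1 : ℝ)))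
      = {x : EuclideanSpace ℝ (Fin d) | x i = 0} := by
    ext x
    simp only [suppHyp, Set.mem_setOf_eq, hsupp0, hinnerx x]
    constructor
    · intro h; linarith
    · intro h; rw [h]; ring
  have hslice0 : tangentConeOf K 0 ∩ {x : EuclideanSpace ℝ (Fin d) | x i = 0} = {0} := by
    obtain ⟨x₀, h1, h2⟩ := hspiky
    have hx₀ : x₀ = 0 := by
      have h3 : ({x₀} : Set (EuclideanSpace ℝ (Fin d))) = {0} := h1.symm.trans hzero
      exact Set.singleton_eq_singleton_iff.mp h3
    rw [hx₀] at h2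
    rw [← hHyp]
    exact h2
  exact SpikyAux.aux_main d i j hij K hKc hKconv hKint h0K hposK hslice0 ε hε δ hδ
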